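/- Let x* maximize the leximin order of the aggregate family utilities U_f(x_f) = ∏_{i∈f} u_i(x_f) over the set E of individual-fair-share feasible allocations, in an economy with strictly monotonic preferences where some individual-strict-FS allocation exists. Then all families have equal aggregate utility at x*: U_f(x*_f) = U_{f'}(x*_{f'}) > 0 for all f, f' ∈ F. -/

import Mathlib

/-- The ascending sorted list of the values of `v`. -/
noncomputable def sortedProfile {ι : Type*} [Fintype ι] (v : ι → ℝ) : List ℝ :=
  (Finset.univ.val.map v).sort (· ≤ ·)

lemma sortedProfile_head {ι : Type*} [Fintype ι] [Nonempty ι] (v : ι → ℝ) :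
    ∃ a t, sortedProfile v = a :: t ∧ (∃ f, v f = a) ∧ ∀ f, a ≤ v f := by
  classical
  set l := sortedProfile v with hl
  have hs : l.Pairwise (· ≤ ·) := Multiset.pairwise_sort _ _
  have hlen : l.length = Fintype.card ι := by
    simp [hl, sortedProfile, Finset.card_univ]
  have hne : l ≠ [] := by
    intro h; rw [h] at hlen; simp at hlen
    exact (Fintype.card_pos (α := ι)).ne' hlen.symm
  obtain ⟨a, t, hat⟩ := List.exists_cons_of_ne_nil hne
  have hmem : ∀ x, x ∈ l ↔ ∃ f, v f = x := by
    intro x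
    simp [hl, sortedProfile, Multiset.mem_sort]
  refine ⟨a, t, hat, ?_, ?_⟩
  · exact (hmem a).1 (by rw [hat]; exact List.mem_cons_self)
  · intro f
    have hvf : v f ∈ l := (hmem (v f)).2 ⟨f, rfl⟩
    rw [hat] at hvf hs
    rcases List.mem_cons.1 hvf with h | h
    · exact h ▸ le_refl _
    · exact (List.pairwise_cons.1 hs).1 _ h

theorem stmt_13 {I F G : Type*} [Fintype I] [Fintype F] [Fintype G] [Nonempty F] [DecidableEq F]
    (fam : I → F) (hsurj : Function.Surjective fam)
    (e : G → ℝ) (he : ∀ g, 0 < e g)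
    (u : I → (G → ℝ) → ℝ) (hu : ∀ i, Continuous (u i))
    (hmono : ∀ i (x x' : G → ℝ), (∀ g, x g ≤ x' g) → x ≠ x' → u i x < u i x')
    (hnorm : ∀ i, u i ((1 / (Fintype.card F : ℝ)) • e) = 0) :
    let Feasible : (F → G → ℝ) → Prop := fun x =>
      (∀ f g, 0 ≤ x f g) ∧ ∀ g, ∑ f, x f g ≤ e g
    let E : (F → G → ℝ) → Prop := fun x => Feasible x ∧ ∀ i, 0 ≤ u i (x (fam i))
    let U : F → (G → ℝ) → ℝ := fun f b =>
      ∏ i ∈ Finset.univ.filter (fun i => fam i = f), u i b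
    ∀ xs, E xs →
      (∀ y, E y → ¬ List.Lex (· < ·) (sortedProfile (fun f => U f (xs f)))
        (sortedProfile (fun f => U f (y f)))) →
      (∃ x', E x' ∧ ∀ i, 0 < u i (x' (fam i))) →
      ∀ f f', U f (xs f) = U f' (xs f') ∧ 0 < U f (xs f) := by
  classical
  intro Feasible E U xs hxs hopt hex f f'
  obtain ⟨x', hx'E, hx'pos⟩ := hex
  -- A general "lex via heads" principle
  have lex_heads : ∀ (v w : F → ℝ) (c : ℝ), (∃ f₁, v f₁ ≤ c) → (∀ f₂, c < w f₂) →
      List.Lex (· < ·) (sortedProfile v) (sortedProfile w) := by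
    intro v w c ⟨f₁, hf₁⟩ hw
    obtain ⟨a, t, hat, -, hamin⟩ := sortedProfile_head v
    obtain ⟨b, s, hbs, ⟨fb, hfb⟩, -⟩ := sortedProfile_head w
    rw [hat, hbs]
    refine List.Lex.rel ?_
    calc a ≤ v f₁ := hamin f₁
    _ ≤ c := hf₁
    _ < w fb := hw fb
    _ = b := hfb
  -- dispose of the empty-goods case
  rcases isEmpty_or_nonempty G with hGe | hG
  · exfalso
    obtain ⟨i0, -⟩ := hsurj (Classical.arbitrary F)
    have : x' (fam i0) = (1 / (Fintype.card F : ℝ)) • e := Subsingleton.elim _ _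
    have h0 := hx'pos i0
    rw [this, hnorm i0] at h0
    exact lt_irrefl _ h0
  -- fibers are nonempty
  have hfib : ∀ f₀ : F, (Finset.univ.filter (fun i => fam i = f₀)).Nonempty := by
    intro f₀
    obtain ⟨i, hi⟩ := hsurj f₀
    exact ⟨i, Finset.mem_filter.2 ⟨Finset.mem_univ _, hi⟩⟩
  -- U f (x' f) > 0 for all f
  have hU'pos : ∀ f₀, 0 < U f₀ (x' f₀) := by
    intro f₀
    refine Finset.prod_pos ?_
    intro i hi
    have hif := (Finset.mem_filter.1 hi).2
    have := hx'pos i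
    rwa [hif] at this
  -- the minimizing family
  obtain ⟨fmin, -, hfmin'⟩ := Finset.exists_min_image (Finset.univ : Finset F)
    (fun f₀ => U f₀ (xs f₀)) ⟨Classical.arbitrary F, Finset.mem_univ _⟩
  have hfmin : ∀ f₀, U fmin (xs fmin) ≤ U f₀ (xs f₀) := fun f₀ => hfmin' f₀ (Finset.mem_univ _)
  -- Step 1: positivity of the minimum
  have hposmin : 0 < U fmin (xs fmin) := by
    by_contra hle
    push_neg at hle
    exact hopt x' hx'E (lex_heads _ _ 0 ⟨fmin, hle⟩ hU'pos)
  have hpos : ∀ f₀, 0 < U f₀ (xs f₀) := fun f₀ => lt_of_lt_of_le hposmin (hfmin f₀)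
  -- Step 2: every individual utility is positive at xs
  have huipos : ∀ i, 0 < u i (xs (fam i)) := by
    intro i
    rcases lt_or_eq_of_le (hxs.2 i) with h | h
    · exact h
    · exfalso
      have hz : U (fam i) (xs (fam i)) = 0 :=
        Finset.prod_eq_zero (Finset.mem_filter.2 ⟨Finset.mem_univ _, rfl⟩) h.symm
      exact (hpos (fam i)).ne' hz
  -- Step 3: all values equal the minimum
  have hall : ∀ f₀, U f₀ (xs f₀) = U fmin (xs fmin) := by
    intro fM
    by_contra hne
    have hM : U fmin (xs fmin) < U fM (xs fM) := lt_of_le_of_ne (hfmin fM) (Ne.symm hne)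
    set m := U fmin (xs fmin) with hm
    have hfMne : fmin ≠ fM := by rintro rfl; exact lt_irrefl _ hM
    have hcard2 : 1 < Fintype.card F := Fintype.one_lt_card_iff.2 ⟨fmin, fM, hfMne⟩
    set n : ℕ := Fintype.card F with hn
    have hn1 : (0:ℝ) < (n:ℝ) - 1 := by
      have : (1:ℝ) < (n:ℝ) := by exact_mod_cast hcard2
      linarith
    -- xs fM has a positive coordinate
    obtain ⟨i0, hi0⟩ := hsurj fM
    have hxsfM : ∃ g0, 0 < xs fM g0 := by
      by_contra hng
      push_neg at hng
      have h0 : xs fM = 0 := by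
        funext g
        exact le_antisymm (hng g) (hxs.1.1 fM g)
      have hbar : ∀ g, (0:ℝ) < ((1 / (n : ℝ)) • e) g := by
        intro g
        have hnp : (0:ℝ) < (n:ℝ) := by positivity
        simp only [Pi.smul_apply, smul_eq_mul, one_div]
        exact mul_pos (inv_pos.2 hnp) (he g)
      have hlt : u i0 0 < u i0 ((1 / (n : ℝ)) • e) := by
        refine hmono i0 _ _ (fun g => (hbar g).le) ?_
        intro hh
        obtain ⟨g⟩ := hG
        have := congrFun hh g
        simp only [Pi.zero_apply] at this
        exact (hbar g).ne this
      rw [hnorm i0] at hlt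
      have := huipos i0
      rw [hi0, h0] at this
      linarith
    obtain ⟨g0, hg0⟩ := hxsfM
    -- the perturbed allocations
    set Y : ℝ → F → G → ℝ := fun t f₀ g =>
      if g = g0 then (if f₀ = fM then xs f₀ g - t else xs f₀ g + t / ((n:ℝ) - 1)) else xs f₀ g
      with hY
    have hY0 : Y 0 fM = xs fM := by
      funext g
      simp only [hY]
      split_ifs <;> ring
    -- continuity of t ↦ Y t fM
    have hYc : Continuous (fun t => Y t fM) := by
      refine continuous_pi ?_
      intro g
      simp only [hY, if_pos rfl]
      by_cases hgg : g = g0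
      · simpa [hgg] using (continuous_sub_left (xs fM g0))
      · simpa [hgg] using continuous_const
    -- eventually-positive individual utilities in family fM
    have hev1 : ∀ᶠ t in nhds (0:ℝ), ∀ i ∈ Finset.univ.filter (fun i => fam i = fM),
        0 < u i (Y t fM) := by
      rw [Filter.eventually_all_finset]
      intro i hi
      have hcont : Filter.Tendsto (fun t => u i (Y t fM)) (nhds 0) (nhds (u i (xs fM))) := by
        have := ((hu i).comp hYc).tendsto 0
        rwa [Function.comp, hY0] at this
      have hip : 0 < u i (xs fM) := by
        have := huipos i
        rwa [(Finset.mem_filter.1 hi).2] at this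
      exact hcont.eventually (eventually_gt_nhds hip)
    -- eventually the product stays above m
    have hev2 : ∀ᶠ t in nhds (0:ℝ), m < U fM (Y t fM) := by
      have hcont : Filter.Tendsto (fun t => U fM (Y t fM)) (nhds 0) (nhds (U fM (xs fM))) := by
        have hc : Continuous (fun t => U fM (Y t fM)) := by
          simp only [U]
          exact continuous_finset_prod _ (fun i _ => (hu i).comp hYc)
        have := hc.tendsto 0
        rwa [hY0] at this
      exact hcont.eventually (eventually_gt_nhds hM)
    -- eventually t is small
    have hev3 : ∀ᶠ t in nhds (0:ℝ), t < xs fM g0 := by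
      exact eventually_lt_nhds hg0
    have hev4 : ∀ᶠ t in nhdsWithin (0:ℝ) (Set.Ioi 0), (0:ℝ) < t :=
      eventually_mem_nhdsWithin
    have hev : ∃ t : ℝ, (∀ i ∈ Finset.univ.filter (fun i => fam i = fM), 0 < u i (Y t fM)) ∧
        m < U fM (Y t fM) ∧ t < xs fM g0 ∧ 0 < t := by
      have h12 := ((hev1.and (hev2.and hev3)).filter_mono nhdsWithin_le_nhds).and hev4
      obtain ⟨t, ⟨h1, h2, h3⟩, h4⟩ := h12.exists
      exact ⟨t, h1, h2, h3, h4⟩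
    obtain ⟨δ, hδ1, hδ2, hδ3, hδ4⟩ := hev
    set y : F → G → ℝ := Y δ with hy
    have hdpos : 0 < δ / ((n:ℝ) - 1) := div_pos hδ4 hn1
    -- y increases every family other than fM
    have hincr : ∀ f₀, f₀ ≠ fM →
        (∀ i, u i (xs f₀) < u i (y f₀)) ∧ U f₀ (xs f₀) < U f₀ (y f₀) := by
      intro f₀ hf₀
      have hle : ∀ g, xs f₀ g ≤ y f₀ g := by
        intro g
        simp only [hy, hY, if_neg hf₀]
        split_ifs
        · linarith
        · exact le_refl _
      have hne' : xs f₀ ≠ y f₀ := by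
        intro hh
        have h1 := congrFun hh g0
        simp only [hy, hY, if_pos rfl, if_neg hf₀] at h1
        linarith
      have hui : ∀ i, u i (xs f₀) < u i (y f₀) := fun i => hmono i _ _ hle hne'
      refine ⟨hui, ?_⟩
      refine Finset.prod_lt_prod_of_nonempty ?_ (fun i _ => hui i) (hfib f₀)
      intro i hi
      have := huipos i
      rwa [(Finset.mem_filter.1 hi).2] at this
    -- y is in E
    have hyE : E y := by
      refine ⟨⟨?_, ?_⟩, ?_⟩
      · intro f₀ g
        simp only [hy, hY]
        split_ifs with h1 h2
        · rw [h1, h2]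
          linarith
        · have := hxs.1.1 f₀ g
          linarith
        · exact hxs.1.1 f₀ g
      · intro g
        by_cases hgg : g = g0
        · rw [hgg]
          have hform : ∀ f₀, y f₀ g0 = xs f₀ g0 + (if f₀ = fM then -δ else δ/((n:ℝ)-1)) := by
            intro f₀
            simp only [hy, hY, if_pos rfl]
            split_ifs <;> ring
          have hzero : ∑ f₀, (if f₀ = fM then -δ else δ/((n:ℝ)-1)) = 0 := by
            rw [← Finset.add_sum_erase _ _ (Finset.mem_univ fM), if_pos rfl]
            rw [Finset.sum_congr rfl (fun x hx => if_neg (Finset.ne_of_mem_erase hx))]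
            rw [Finset.sum_const, Finset.card_erase_of_mem (Finset.mem_univ fM),
              Finset.card_univ, nsmul_eq_mul, Nat.cast_sub hcard2.le, Nat.cast_one]
            field_simp
            ring
          calc ∑ f₀, y f₀ g0 = ∑ f₀, (xs f₀ g0 + (if f₀ = fM then -δ else δ/((n:ℝ)-1))) :=
                Finset.sum_congr rfl (fun f₀ _ => hform f₀)
            _ = ∑ f₀, xs f₀ g0 + ∑ f₀, (if f₀ = fM then -δ else δ/((n:ℝ)-1)) :=
                Finset.sum_add_distrib
            _ = ∑ f₀, xs f₀ g0 := by rw [hzero, add_zero]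
            _ ≤ e g0 := hxs.1.2 g0
        · have heq : ∀ f₀, y f₀ g = xs f₀ g := by
            intro f₀
            simp only [hy, hY, if_neg hgg]
          rw [Finset.sum_congr rfl (fun f₀ _ => heq f₀)]
          exact hxs.1.2 g
      · intro i
        by_cases hf : fam i = fM
        · rw [hf]
          exact (hδ1 i (Finset.mem_filter.2 ⟨Finset.mem_univ _, hf⟩)).le
        · exact ((hxs.2 i).trans_lt ((hincr _ hf).1 i)).le
    -- the profile of y lexicographically dominates strictly
    refine hopt y hyE (lex_heads _ _ m ⟨fmin, le_refl m⟩ ?_)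
    intro f₂
    by_cases hf : f₂ = fM
    · subst hf
      exact hδ2
    · exact (hfmin f₂).trans_lt (hincr f₂ hf).2
  exact ⟨(hall f).trans (hall f').symm, hpos f⟩
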